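/- arXiv:math/0001036 — 5 statements merged into one kernel-verified Lean document; each statement's English description precedes it below -/
import Mathlib

section
/- Let q > 0 be a real number. There exists a complex number t with |t| < 1 and t ≠ 0 such that (1−t)^{q+2} = (1+t)^{q+2} (principal-branch complex powers) if and only if q > 2. -/
open Complex Real

lemma arg_one_add_real_mul_I (c : ℝ) : Complex.arg (1 + c * Complex.I) = Real.arctan c := by
  have hre : ((1 : ℂ) + c * Complex.I).re = 1 := by simp
  have him : ((1 : ℂ) + c * Complex.I).im = c := by simp
  have h2 : |Complex.arg (1 + c * Complex.I)| < π / 2 :=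
    Complex.abs_arg_lt_pi_div_two_iff.mpr (Or.inl (by simp))
  have htan := Complex.tan_arg (1 + c * Complex.I)
  rw [hre, him, div_one] at htan
  obtain ⟨hl, hr⟩ := abs_lt.mp h2
  have h3 := Real.arctan_tan hl hr
  rw [htan] at h3
  exact h3.symm

lemma log_one_sub_real_mul_I (b : ℝ) :
    Complex.log (1 - b * Complex.I) =
      Complex.log (1 + b * Complex.I) - 2 * (Real.arctan b : ℂ) * Complex.I := by
  have hrw : (1 : ℂ) - b * Complex.I = 1 + (-b : ℝ) * Complex.I := by push_cast; ring
  have habs : ‖(1 - b * Complex.I)‖ = ‖(1 + b * Complex.I)‖ := by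
    rw [Complex.norm_def, Complex.norm_def, Complex.normSq_apply, Complex.normSq_apply]
    simp
  apply Complex.ext
  · simp only [Complex.log_re, Complex.sub_re, Complex.mul_re, Complex.mul_im,
      Complex.I_re, Complex.I_im, Complex.ofReal_re, Complex.ofReal_im,
      Complex.re_ofNat, Complex.im_ofNat, habs]
    ring
  · rw [hrw]
    simp only [Complex.sub_im, Complex.log_im, arg_one_add_real_mul_I, Real.arctan_neg,
      Complex.mul_im, Complex.mul_re, Complex.I_re, Complex.I_im, Complex.ofReal_re,
      Complex.ofReal_im, Complex.re_ofNat, Complex.im_ofNat]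
    ring

/-- For real `q > 0`, there is a nonzero `t` in the unit disk with
`(1-t)^{q+2} = (1+t)^{q+2}` (principal powers) if and only if `q > 2`. -/
theorem weighted_disk_kernel_zeroes_iff (q : ℝ) (hq : 0 < q) :
    (∃ t : ℂ, ‖t‖ < 1 ∧ t ≠ 0 ∧
      (1 - t) ^ ((q : ℂ) + 2) = (1 + t) ^ ((q : ℂ) + 2)) ↔ 2 < q := by
  have hp : (0 : ℝ) < q + 2 := by linarith
  constructor
  · rintro ⟨t, hlt, hne, heq⟩
    have h1 : (1 : ℂ) - t ≠ 0 := by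
      intro h
      rw [sub_eq_zero] at h
      rw [← h] at hlt
      simp at hlt
    have h2 : (1 : ℂ) + t ≠ 0 := by
      intro h
      have : t = -1 := by linear_combination h
      rw [this] at hlt
      simp at hlt
    rw [Complex.cpow_def_of_ne_zero h1, Complex.cpow_def_of_ne_zero h2,
      Complex.exp_eq_exp_iff_exists_int] at heq
    obtain ⟨n, hn⟩ := heq
    have hd : (Complex.log (1 - t) - Complex.log (1 + t)) * ((q : ℂ) + 2)
        = n * (2 * π * Complex.I) := by linear_combination hn
    -- real part: abs equal
    have hre : (Real.log ‖1 - t‖ - Real.log ‖1 + t‖) * (q + 2) = 0 := by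
      have := congrArg Complex.re hd
      simpa [Complex.mul_re, Complex.sub_re, Complex.log_re, Complex.log_im] using this
    have hlogeq : Real.log ‖1 - t‖ = Real.log ‖1 + t‖ := by
      have := mul_eq_zero.mp hre
      rcases this with h | h
      · linarith
      · linarith
    have habs : ‖1 - t‖ = ‖1 + t‖ := by
      have e1 := Real.exp_log (norm_pos_iff.mpr h1)
      have e2 := Real.exp_log (norm_pos_iff.mpr h2)
      rw [← e1, ← e2, hlogeq]
    have htre : t.re = 0 := by
      have h3 : ‖1 - t‖ ^ 2 = ‖1 + t‖ ^ 2 := by rw [habs]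
      rw [Complex.sq_norm, Complex.sq_norm, Complex.normSq_apply, Complex.normSq_apply] at h3
      simp only [Complex.sub_re, Complex.sub_im, Complex.add_re, Complex.add_im,
        Complex.one_re, Complex.one_im] at h3
      nlinarith
    set b : ℝ := t.im with hb
    have ht : t = (b : ℂ) * Complex.I := by
      apply Complex.ext <;> simp [htre, hb]
    have hbne : b ≠ 0 := by
      intro h
      apply hne
      rw [ht, h]
      simp
    have hblt : |b| < 1 := by
      rw [ht] at hlt
      simpa using hlt
    rw [ht, log_one_sub_real_mul_I b] at hd
    have him : (-2 * Real.arctan b) * (q + 2) = n * (2 * π) := by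
      have := congrArg Complex.im hd
      simp only [Complex.mul_im, Complex.sub_im, Complex.sub_re, Complex.log_im,
        Complex.log_re, Complex.mul_re, Complex.I_re, Complex.I_im, Complex.ofReal_re,
        Complex.ofReal_im, Complex.add_re, Complex.add_im, Complex.one_re, Complex.one_im,
        Complex.intCast_re, Complex.intCast_im, Complex.re_ofNat, Complex.im_ofNat] at this
      nlinarith [this]
    have harcne : Real.arctan b ≠ 0 := fun h => hbne (Real.arctan_eq_zero_iff.mp h)
    have hnne : (n : ℝ) ≠ 0 := by
      intro h
      rw [h] at him
      simp at him
      rcases him with h | h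
      · exact hbne h
      · linarith
    have hn1 : 1 ≤ |(n : ℝ)| := by
      have : n ≠ 0 := fun h => hnne (by exact_mod_cast congrArg (Int.cast : ℤ → ℝ) h)
      exact_mod_cast Int.one_le_abs (by omega)
    have harcbound : |Real.arctan b| < π / 4 := by
      have hA : Real.arctan b < π / 4 := by
        rw [← Real.arctan_one]
        exact Real.arctan_strictMono (lt_of_le_of_lt (le_abs_self b) hblt)
      have hB : -(π / 4) < Real.arctan b := by
        rw [← Real.arctan_one, ← Real.arctan_neg]
        refine Real.arctan_strictMono ?_
        have := neg_abs_le b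
        linarith
      exact abs_lt.mpr ⟨hB, hA⟩
    have habs_eq : 2 * |Real.arctan b| * (q + 2) = |(n : ℝ)| * (2 * π) := by
      have h := congrArg (fun x : ℝ => |x|) him
      simp only [abs_mul] at h
      rw [abs_of_pos hp, abs_of_pos Real.pi_pos] at h
      norm_num at h
      linarith
    nlinarith [Real.pi_pos, abs_nonneg (Real.arctan b), abs_nonneg ((n : ℝ)), hn1,
      harcbound, habs_eq, mul_pos Real.pi_pos hp]
  · intro hq2
    have hp4 : (4 : ℝ) < q + 2 := by linarith
    set θ : ℝ := π / (q + 2) with hθ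
    have hθpos : 0 < θ := by positivity
    have hθlt : θ < π / 4 := by
      rw [hθ, div_lt_div_iff₀ hp (by norm_num)]
      nlinarith [Real.pi_pos]
    set b : ℝ := Real.tan θ with hbdef
    have harctan : Real.arctan b = θ :=
      Real.arctan_tan (by linarith [Real.pi_pos]) (by linarith [Real.pi_pos])
    have hbpos : 0 < b := Real.tan_pos_of_pos_of_lt_pi_div_two hθpos (by linarith [Real.pi_pos])
    have hblt : b < 1 := by
      by_contra h
      push_neg at h
      have : Real.arctan 1 ≤ Real.arctan b := Real.arctan_strictMono.monotone h
      rw [Real.arctan_one, harctan] at this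
      linarith
    refine ⟨(b : ℂ) * Complex.I, by simpa using (abs_lt.mpr ⟨by linarith, hblt⟩), ?_, ?_⟩
    · simp [Complex.ext_iff, hbpos.ne']
    · have h1 : (1 : ℂ) - (b : ℂ) * Complex.I ≠ 0 := by
        intro h
        have := congrArg Complex.re h
        simp at this
      have h2 : (1 : ℂ) + (b : ℂ) * Complex.I ≠ 0 := by
        intro h
        have := congrArg Complex.re h
        simp at this
      rw [Complex.cpow_def_of_ne_zero h1, Complex.cpow_def_of_ne_zero h2,
        Complex.exp_eq_exp_iff_exists_int]
      refine ⟨-1, ?_⟩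
      rw [log_one_sub_real_mul_I b, harctan]
      have hππ : ((θ : ℂ)) * ((q : ℂ) + 2) = (π : ℂ) := by
        have hpc : ((q : ℂ) + 2) ≠ 0 := by
          have h0 : ((q + 2 : ℝ) : ℂ) ≠ 0 := by exact_mod_cast hp.ne'
          push_cast at h0
          exact h0
        rw [hθ]
        push_cast
        exact div_mul_cancel₀ _ hpc
      push_cast
      linear_combination (-2 * Complex.I) * hππ
end

section
/- Let p > 0 be a real number. There exists a complex number u with Re u > 0 and u ≠ 1 such that u^p = 1 (principal-branch complex power) if and only if p > 4. -/
open Complex Real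

/-- For real `p > 0`, there is a `u ≠ 1` in the right half-plane with
`u^p = 1` (principal power) if and only if `p > 4`. -/
theorem cpow_eq_one_in_right_halfplane_iff (p : ℝ) (hp : 0 < p) :
    (∃ u : ℂ, 0 < u.re ∧ u ≠ 1 ∧ u ^ (p : ℂ) = 1) ↔ 4 < p := by
  constructor
  · rintro ⟨u, hre, hne, h1⟩
    have hu0 : u ≠ 0 := by
      intro h; rw [h] at hre; simp at hre
    rw [Complex.cpow_def_of_ne_zero hu0] at h1
    obtain ⟨n, hn⟩ := Complex.exp_eq_one_iff.mp h1
    have hre' : (Complex.log u * p).re = Real.log (‖u‖) * p := by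
      simp [Complex.mul_re, Complex.log_re]
    have him : (Complex.log u * p).im = u.arg * p := by
      simp [Complex.mul_im, Complex.log_im]
    have hrhs_re : ((n : ℂ) * (2 * (Real.pi : ℂ) * I)).re = 0 := by simp
    have hrhs_im : ((n : ℂ) * (2 * (Real.pi : ℂ) * I)).im = n * (2 * Real.pi) := by
      simp [Complex.mul_im]
    have h2 : Real.log (‖u‖) * p = 0 := by
      rw [← hre', hn, hrhs_re]
    have h3 : u.arg * p = n * (2 * Real.pi) := by
      rw [← him, hn, hrhs_im]
    have hlog : Real.log (‖u‖) = 0 := by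
      rcases mul_eq_zero.mp h2 with h | h
      · exact h
      · exact absurd h hp.ne'
    have habs : ‖u‖ = 1 := by
      have := Real.exp_log (norm_pos_iff.mpr hu0)
      rw [← this, hlog, Real.exp_zero]
    have harg : u.arg ≠ 0 := by
      intro h
      obtain ⟨h1', h2'⟩ := Complex.arg_eq_zero_iff.mp h
      apply hne
      have hab : ‖u‖ = |u.re| := by
        rw [Complex.norm_def, Complex.normSq_apply, h2']
        simp [Real.sqrt_mul_self_eq_abs]
      rw [hab, abs_of_pos hre] at habs
      exact Complex.ext habs h2'
    have hn0 : n ≠ 0 := by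
      intro h
      rw [h] at h3
      simp at h3
      rcases h3 with h | h
      · exact harg h
      · exact absurd h hp.ne'
    have hargbound : |u.arg| < Real.pi / 2 :=
      Complex.abs_arg_lt_pi_div_two_iff.mpr (Or.inl hre)
    have hkey : 2 * Real.pi ≤ |u.arg| * p := by
      have : |u.arg * p| = |(n : ℝ)| * (2 * Real.pi) := by
        rw [h3, abs_mul, abs_of_pos (by positivity : (0:ℝ) < 2 * Real.pi)]
      have h1k : (1 : ℝ) ≤ |(n : ℝ)| := by
        rw [← Int.cast_abs]
        exact_mod_cast Int.one_le_abs hn0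
      calc 2 * Real.pi = 1 * (2 * Real.pi) := (one_mul _).symm
        _ ≤ |(n : ℝ)| * (2 * Real.pi) := by
            apply mul_le_mul_of_nonneg_right h1k; positivity
        _ = |u.arg * p| := this.symm
        _ = |u.arg| * p := by rw [abs_mul, abs_of_pos hp]
    have : 2 * Real.pi < (Real.pi / 2) * p :=
      lt_of_le_of_lt hkey (by
        apply mul_lt_mul_of_pos_right hargbound
        positivity)
    nlinarith [Real.pi_pos]
  · intro h4
    refine ⟨Complex.exp ((2 * Real.pi / p : ℝ) * I), ?_, ?_, ?_⟩
    all_goals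
      have hθpos : 0 < 2 * Real.pi / p := by positivity
      have hθlt : 2 * Real.pi / p < Real.pi / 2 := by
        rw [div_lt_div_iff₀ hp (by norm_num : (0:ℝ) < 2)]
        nlinarith [Real.pi_pos]
    · have hre : (Complex.exp ((2 * Real.pi / p : ℝ) * I)).re = Real.cos (2 * Real.pi / p) := by
        rw [Complex.exp_re]; simp
      rw [hre]
      exact Real.cos_pos_of_mem_Ioo ⟨by linarith [Real.pi_pos], hθlt⟩
    · intro h
      have : (Complex.exp ((2 * Real.pi / p : ℝ) * I)).im = Real.sin (2 * Real.pi / p) := by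
        rw [Complex.exp_im]; simp
      rw [h] at this
      simp at this
      have : 0 < Real.sin (2 * Real.pi / p) :=
        Real.sin_pos_of_pos_of_lt_pi hθpos (by linarith [Real.pi_pos])
      linarith [this]
    · have hlog : Complex.log (Complex.exp ((2 * Real.pi / p : ℝ) * I)) = (2 * Real.pi / p : ℝ) * I := by
        apply Complex.log_exp
        · simp; linarith [Real.pi_pos]
        · simp; linarith [Real.pi_pos, hθlt]
      rw [Complex.cpow_def_of_ne_zero (Complex.exp_ne_zero _), hlog]
      rw [show ((2 * Real.pi / p : ℝ) : ℂ) * I * (p : ℂ) = ((2 * Real.pi / p * p : ℝ) : ℂ) * I by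
        push_cast; ring]
      rw [div_mul_cancel₀ _ hp.ne']
      push_cast
      exact Complex.exp_two_pi_mul_I
end

section
/- Let G be a nonempty bounded open subset of ℂⁿ and let z ∈ G. For t > 0 define S_t(z) = sup { |f(z)|² : f holomorphic on G and ∫_G |f(w)|² e^{−t‖w‖} dV(w) ≤ 1 }. Then S_t(z)^{1/t} → e^{‖z‖} as t → ∞. -/
open MeasureTheory Metric Filter

noncomputable instance (n : ℕ) : MeasureSpace (EuclideanSpace ℂ (Fin n)) :=
  { volume := Measure.map (WithLp.toLp 2) (volume : Measure (Fin n → ℂ)) }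

open Real Set intervalIntegral

instance (n : ℕ) : BorelSpace (EuclideanSpace ℂ (Fin n)) :=
  inferInstance

lemma circle_submean {g : ℂ → ℂ} {c : ℂ} {ρ : ℝ} (hρ : 0 < ρ)
    (hd : ∀ x ∈ closedBall c ρ, DifferentiableAt ℂ g x) :
    2 * π * ‖g c‖ ≤ ∫ θ in (0:ℝ)..(2*π), ‖g (circleMap c ρ θ)‖ := by
  have hcont : ContinuousOn g (closedBall c ρ) := fun x hx => (hd x hx).continuousAt.continuousWithinAt
  have hC := Complex.circleIntegral_sub_center_inv_smul_of_differentiable_on_off_countable hρ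
    Set.countable_empty hcont (fun x hx => hd x (ball_subset_closedBall hx.1))
  rw [circleIntegral] at hC
  have hint : ∀ θ : ℝ, deriv (circleMap c ρ) θ • (circleMap c ρ θ - c)⁻¹ • g (circleMap c ρ θ)
      = Complex.I * g (circleMap c ρ θ) := by
    intro θ
    rw [deriv_circleMap, circleMap_sub_center, smul_eq_mul, smul_eq_mul]
    have h0 : circleMap 0 ρ θ ≠ 0 := circleMap_ne_center hρ.ne'
    field_simp
  simp_rw [hint] at hC
  rw [intervalIntegral.integral_const_mul] at hC
  have hI : (∫ θ in (0:ℝ)..(2*π), g (circleMap c ρ θ)) = (2 * π : ℝ) • g c := by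
    rw [smul_eq_mul] at hC
    apply mul_left_cancel₀ Complex.I_ne_zero
    rw [hC, Complex.real_smul]; push_cast; ring
  have hnorm : ‖(2 * π : ℝ) • g c‖ = 2 * π * ‖g c‖ := by
    rw [norm_smul, Real.norm_eq_abs, abs_of_pos Real.two_pi_pos]
  calc 2 * π * ‖g c‖ = ‖∫ θ in (0:ℝ)..(2*π), g (circleMap c ρ θ)‖ := by rw [hI, hnorm]
    _ ≤ ∫ θ in (0:ℝ)..(2*π), ‖g (circleMap c ρ θ)‖ :=
        intervalIntegral.norm_integral_le_integral_norm Real.two_pi_pos.le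

lemma circle_submean' {g : ℂ → ℂ} {c : ℂ} {ρ : ℝ} (hρ : 0 < ρ)
    (hd : ∀ x ∈ closedBall c ρ, DifferentiableAt ℂ g x) :
    2 * π * ‖g c‖ ≤ ∫ θ in (-π)..π, ‖g (circleMap c ρ θ)‖ := by
  have hper : Function.Periodic (fun θ : ℝ => ‖g (circleMap c ρ θ)‖) (2*π) := by
    intro θ; simp [(periodic_circleMap c ρ) θ]
  have := hper.intervalIntegral_add_eq (-π) 0
  have h2 : (-π) + 2*π = π := by ring
  have h3 : (0:ℝ) + 2*π = 2*π := by ring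
  rw [h2, h3] at this
  rw [this]
  exact circle_submean hρ hd

lemma disc_submean {g : ℂ → ℂ} {c : ℂ} {ρ : ℝ} (hρ : 0 < ρ)
    (hd : ∀ x ∈ closedBall c ρ, DifferentiableAt ℂ g x) :
    π * ρ^2 * ‖g c‖ ≤ ∫ y in ball c ρ, ‖g y‖ := by
  have hcont : ContinuousOn g (closedBall c ρ) := fun x hx => (hd x hx).continuousAt.continuousWithinAt
  -- the polar-coordinates integrand
  set u : ℝ × ℝ → ℝ := fun p => p.1 * ‖g (c + p.1 * (Real.cos p.2 + Real.sin p.2 * Complex.I))‖ with hu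
  have hmapcont : ContinuousOn u (Icc 0 ρ ×ˢ Icc (-π) π) := by
    apply (continuous_fst.continuousOn).mul
    apply ContinuousOn.norm
    apply hcont.comp
    · fun_prop
    · intro p hp
      simp only [mem_closedBall, dist_eq_norm]
      have : (c + ↑p.1 * (Real.cos p.2 + Real.sin p.2 * Complex.I)) - c
          = ↑p.1 * (Real.cos p.2 + Real.sin p.2 * Complex.I) := by ring
      rw [this]
      rw [norm_mul]
      have habs : ‖(Real.cos p.2 + Real.sin p.2 * Complex.I : ℂ)‖ = 1 := by
        have : ((Real.cos p.2 : ℂ) + Real.sin p.2 * Complex.I) = Complex.exp (p.2 * Complex.I) := by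
          rw [Complex.exp_mul_I, Complex.ofReal_cos, Complex.ofReal_sin]
        rw [this]
        exact Complex.norm_exp_ofReal_mul_I p.2
      rw [habs, mul_one, Complex.norm_real, Real.norm_eq_abs,
        abs_of_nonneg hp.1.1]
      exact hp.1.2
  have hintS : IntegrableOn u (Ioo 0 ρ ×ˢ Ioo (-π) π) := by
    apply (hmapcont.integrableOn_compact (isCompact_Icc.prod isCompact_Icc)).mono_set
    exact Set.prod_mono Ioo_subset_Icc_self Ioo_subset_Icc_self
  set S : Set (ℝ × ℝ) := Ioo 0 ρ ×ˢ Ioo (-π) π with hS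
  set k : ℂ → ℝ := (ball (0:ℂ) ρ).indicator (fun y => ‖g (c + y)‖) with hk
  have htrans : ∫ y in ball c ρ, ‖g y‖ = ∫ y, k y := by
    rw [hk, MeasureTheory.integral_indicator measurableSet_ball]
    have hpre : (fun y : ℂ => c + y) ⁻¹' (ball c ρ) = ball (0:ℂ) ρ := by
      ext y; simp [mem_ball, dist_eq_norm]
    rw [← hpre]
    exact ((measurePreserving_add_left volume c).setIntegral_preimage_emb
      (MeasurableEquiv.addLeft c).measurableEmbedding (fun x => ‖g x‖) _).symm
  have hpolar : ∫ y, k y = ∫ p in polarCoord.target, p.1 • k (Complex.polarCoord.symm p) :=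
    (Complex.integral_comp_polarCoord_symm k).symm
  have hST : S ⊆ polarCoord.target := by
    rw [polarCoord_target]
    exact Set.prod_mono Ioo_subset_Ioi_self subset_rfl
  have hSmeas : MeasurableSet S := (measurableSet_Ioo.prod measurableSet_Ioo)
  have htmeas : MeasurableSet polarCoord.target := by
    rw [polarCoord_target]
    exact measurableSet_Ioi.prod measurableSet_Ioo
  have heval : ∀ p ∈ polarCoord.target, p.1 • k (Complex.polarCoord.symm p) = S.indicator u p := by
    intro p hp
    rw [polarCoord_target] at hp
    simp only [Set.mem_prod, mem_Ioi, mem_Ioo] at hp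
    obtain ⟨hp1, hp2⟩ := hp
    rw [Complex.polarCoord_symm_apply]
    have habsp : ‖((p.1 : ℂ) * (Real.cos p.2 + Real.sin p.2 * Complex.I))‖ = p.1 := by
      have h1 : ((Real.cos p.2 : ℂ) + Real.sin p.2 * Complex.I) = Complex.exp (p.2 * Complex.I) := by
        rw [Complex.exp_mul_I, Complex.ofReal_cos, Complex.ofReal_sin]
      rw [norm_mul, h1, Complex.norm_exp_ofReal_mul_I,
        mul_one, Complex.norm_real, Real.norm_eq_abs, abs_of_pos hp1]
    by_cases h : p.1 < ρ
    · have hmem : ((p.1 : ℂ) * (Real.cos p.2 + Real.sin p.2 * Complex.I)) ∈ ball (0:ℂ) ρ := by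
        rw [mem_ball, dist_zero_right, habsp]; exact h
      rw [hk, Set.indicator_of_mem hmem, Set.indicator_of_mem (by simp only [hS, Set.mem_prod, mem_Ioo, mem_Ioi]; exact ⟨⟨hp1, h⟩, hp2⟩)]
      simp [u, smul_eq_mul]
    · have hmem : ((p.1 : ℂ) * (Real.cos p.2 + Real.sin p.2 * Complex.I)) ∉ ball (0:ℂ) ρ := by
        rw [mem_ball, dist_zero_right, habsp]; exact h
      have hmem2 : p ∉ S := by
        simp only [hS, Set.mem_prod, mem_Ioo, not_and, not_lt]
        intro hc; exact absurd hc.2 (not_lt.2 (le_of_not_gt h))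
      rw [hk, Set.indicator_of_notMem hmem, Set.indicator_of_notMem hmem2, smul_zero]
  have hstep : ∫ p in polarCoord.target, p.1 • k (Complex.polarCoord.symm p) = ∫ p in S, u p := by
    rw [setIntegral_congr_fun htmeas heval, setIntegral_indicator hSmeas,
      Set.inter_eq_self_of_subset_right hST]
  -- Fubini
  have hSrestrict : (volume : Measure (ℝ × ℝ)).restrict S
      = (volume.restrict (Ioo 0 ρ)).prod (volume.restrict (Ioo (-π) π)) := by
    rw [hS, Measure.volume_eq_prod, Measure.prod_restrict]
  have hintS' : Integrable u ((volume.restrict (Ioo 0 ρ)).prod (volume.restrict (Ioo (-π) π))) := by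
    rw [← hSrestrict]; exact hintS
  have hfub : ∫ p in S, u p = ∫ r in Ioo (0:ℝ) ρ, ∫ θ in Ioo (-π) π, u (r, θ) := by
    rw [hSrestrict]; exact integral_prod u hintS'
  set F : ℝ → ℝ := fun r => ∫ θ in Ioo (-π) π, u (r, θ) with hF
  have hFint : IntegrableOn F (Ioo 0 ρ) := hintS'.integral_prod_left
  -- pointwise lower bound for the inner integral, for r ∈ Icc 0 ρ
  have hinner : ∀ r ∈ Icc (0:ℝ) ρ, 2 * π * ‖g c‖ * r ≤ F r := by
    intro r hr
    rcases eq_or_lt_of_le hr.1 with h0 | h0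
    · have : F r = 0 := by
        rw [hF]; simp only [← h0]
        simp [u]
      rw [this, ← h0, mul_zero]
    · have hdr : ∀ x ∈ closedBall c r, DifferentiableAt ℂ g x := fun x hx =>
        hd x (closedBall_subset_closedBall hr.2 hx)
      have hcs := circle_submean' h0 hdr
      have hcirc : ∀ θ : ℝ, u (r, θ) = r * ‖g (circleMap c r θ)‖ := by
        intro θ
        rw [hu]
        simp only [circleMap]
        rw [Complex.exp_mul_I, Complex.ofReal_cos, Complex.ofReal_sin]
      have hFeq : F r = r * ∫ θ in (-π)..π, ‖g (circleMap c r θ)‖ := by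
        rw [hF]
        simp only [hcirc]
        rw [MeasureTheory.integral_const_mul,
          intervalIntegral.integral_of_le (by linarith [Real.pi_pos] : -π ≤ π),
          integral_Ioc_eq_integral_Ioo]
      rw [hFeq]
      calc 2 * π * ‖g c‖ * r = r * (2 * π * ‖g c‖) := by ring
        _ ≤ r * ∫ θ in (-π)..π, ‖g (circleMap c r θ)‖ :=
            mul_le_mul_of_nonneg_left hcs h0.le
  have hioo : ∫ r in Ioo (0:ℝ) ρ, F r = ∫ r in (0:ℝ)..ρ, F r := by
    rw [intervalIntegral.integral_of_le hρ.le, integral_Ioc_eq_integral_Ioo]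
  have hFii : IntervalIntegrable F volume 0 ρ := by
    rw [intervalIntegrable_iff_integrableOn_Ioo_of_le hρ.le]
    exact hFint
  have hmono : ∫ r in (0:ℝ)..ρ, 2 * π * ‖g c‖ * r ≤ ∫ r in (0:ℝ)..ρ, F r :=
    intervalIntegral.integral_mono_on hρ.le
      (Continuous.intervalIntegrable (by fun_prop) 0 ρ) hFii hinner
  have hval : ∫ r in (0:ℝ)..ρ, 2 * π * ‖g c‖ * r = π * ρ^2 * ‖g c‖ := by
    rw [intervalIntegral.integral_const_mul, integral_id]
    ring
  calc π * ρ^2 * ‖g c‖ = ∫ r in (0:ℝ)..ρ, 2 * π * ‖g c‖ * r := hval.symm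
    _ ≤ ∫ r in (0:ℝ)..ρ, F r := hmono
    _ = ∫ r in Ioo (0:ℝ) ρ, F r := hioo.symm
    _ = ∫ p in S, u p := hfub.symm
    _ = ∫ p in polarCoord.target, p.1 • k (Complex.polarCoord.symm p) := hstep.symm
    _ = ∫ y, k y := hpolar.symm
    _ = ∫ y in ball c ρ, ‖g y‖ := htrans.symm

lemma disc_submean_lintegral {g : ℂ → ℂ} {c : ℂ} {ρ : ℝ} (hρ : 0 < ρ)
    (hd : ∀ x ∈ closedBall c ρ, DifferentiableAt ℂ g x) :
    ENNReal.ofReal (π * ρ^2) * ‖g c‖₊ ≤ ∫⁻ y in ball c ρ, (‖g y‖₊ : ENNReal) := by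
  have hcont : ContinuousOn (fun y => ‖g y‖) (closedBall c ρ) := fun x hx =>
    ((hd x hx).continuousAt.continuousWithinAt).norm
  have hint : IntegrableOn (fun y => ‖g y‖) (ball c ρ) :=
    (hcont.integrableOn_compact (isCompact_closedBall c ρ)).mono_set ball_subset_closedBall
  have h1 : ∫⁻ y in ball c ρ, (‖g y‖₊ : ENNReal) = ENNReal.ofReal (∫ y in ball c ρ, ‖g y‖) := by
    rw [ofReal_integral_eq_lintegral_ofReal hint (Eventually.of_forall fun y => norm_nonneg _)]
    simp_rw [ofReal_norm, enorm_eq_nnnorm]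
  rw [h1]
  calc ENNReal.ofReal (π * ρ^2) * (‖g c‖₊ : ENNReal)
      = ENNReal.ofReal (π * ρ^2 * ‖g c‖) := by
        rw [← enorm_eq_nnnorm, ← ofReal_norm (g c), ← ENNReal.ofReal_mul (by positivity)]
    _ ≤ ENNReal.ofReal (∫ y in ball c ρ, ‖g y‖) :=
        ENNReal.ofReal_le_ofReal (disc_submean hρ hd)

lemma polydisc_submean (n : ℕ) {f : EuclideanSpace ℂ (Fin n) → ℂ} {z : EuclideanSpace ℂ (Fin n)}
    {ρ : ℝ} (hρ : 0 < ρ)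
    (hd : ∀ x : EuclideanSpace ℂ (Fin n), (∀ i, x i ∈ closedBall (z i) ρ) →
      DifferentiableAt ℂ f x) :
    ENNReal.ofReal ((π * ρ^2)^n) * ‖f z‖₊ ≤
      ∫⁻ w in Set.univ.pi (fun i => ball (z i) ρ), (‖f (WithLp.toLp 2 w)‖₊ : ENNReal)
        ∂(Measure.pi fun _ : Fin n => (volume : Measure ℂ)) := by
  classical
  set Q : Set (Fin n → ℂ) := Set.univ.pi (fun i => ball (z i) ρ) with hQ
  have hQopen : IsOpen Q := isOpen_set_pi Set.finite_univ (fun i _ => isOpen_ball)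
  have hQsub : ∀ x ∈ Q, ∀ i, x i ∈ closedBall (z i) ρ := by
    intro x hx i; exact ball_subset_closedBall (hx i (Set.mem_univ i))
  set F : (Fin n → ℂ) → ENNReal := Q.indicator (fun w => (‖f (WithLp.toLp 2 w)‖₊ : ENNReal)) with hF
  have hfc : ContinuousOn (fun w : Fin n → ℂ => (‖f (WithLp.toLp 2 w)‖₊ : ENNReal)) Q := by
    intro x hx
    have h1 : ContinuousAt (fun w : Fin n → ℂ => f (WithLp.toLp 2 w)) x :=
      (hd (WithLp.toLp 2 x) (hQsub x hx)).continuousAt.comp (PiLp.continuous_toLp 2 _).continuousAt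
    exact (ENNReal.continuous_coe.continuousAt.comp
      (continuous_nnnorm.continuousAt.comp h1)).continuousWithinAt
  have hFmeas : Measurable F := by
    have h := hfc.measurable_piecewise (continuousOn_const (c := (0:ENNReal)))
      hQopen.measurableSet
    have heq : Q.piecewise (fun w => (‖f (WithLp.toLp 2 w)‖₊ : ENNReal)) (fun _ => 0) = F := by
      funext w; by_cases hw : w ∈ Q <;> simp [hF, hw]
    rwa [heq] at h
  have key : ∀ s : Finset (Fin n), ∀ x : Fin n → ℂ,
      (∀ i, x i ∈ ball (z i) ρ) → (∀ i ∈ s, x i = z i) →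
      ENNReal.ofReal ((π * ρ^2)^(s.card)) * ‖f (WithLp.toLp 2 x)‖₊ ≤
        (∫⋯∫⁻_s, F ∂(fun _ => (volume : Measure ℂ))) x := by
    intro s
    induction s using Finset.induction_on with
    | empty =>
      intro x hx _
      rw [lmarginal_empty]
      simp only [Finset.card_empty, pow_zero, ENNReal.ofReal_one, one_mul]
      rw [hF, Set.indicator_of_mem (Set.mem_univ_pi.2 hx)]
    | @insert j s hj ih =>
      intro x hx hcen
      rw [lmarginal_insert _ hFmeas hj]
      set g : ℂ → ℂ := fun y => f (WithLp.toLp 2 (Function.update x j y)) with hg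
      have hupd : ∀ y : ℂ, ∀ i, dist y (z j) ≤ ρ → (Function.update x j y) i ∈ closedBall (z i) ρ := by
        intro y i hy
        by_cases hij : i = j
        · subst hij; rw [Function.update_self]; exact hy
        · rw [Function.update_of_ne hij]; exact ball_subset_closedBall (hx i)
      have hgd : ∀ y ∈ closedBall (z j) ρ, DifferentiableAt ℂ g y := by
        have hpteq : ∀ y : ℂ, ((EuclideanSpace.equiv (Fin n) ℂ).symm
            ((x : Fin n → ℂ) + (LinearMap.single ℂ (fun _ : Fin n => ℂ) j).toContinuousLinearMap (y - x j)))
            = WithLp.toLp 2 (Function.update x j y) := by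
          intro y
          ext i
          show x i + (LinearMap.single ℂ (fun _ : Fin n => ℂ) j).toContinuousLinearMap (y - x j) i
            = Function.update x j y i
          rw [LinearMap.coe_toContinuousLinearMap']
          by_cases hij : i = j
          · subst hij
            simp [LinearMap.single_apply, Pi.single_apply, Function.update_self]
          · simp [LinearMap.single_apply, Pi.single_apply, hij, Function.update_of_ne hij]
        have hm : Differentiable ℂ (fun y : ℂ => (EuclideanSpace.equiv (Fin n) ℂ).symm
            ((x : Fin n → ℂ) + (LinearMap.single ℂ (fun _ : Fin n => ℂ) j).toContinuousLinearMap (y - x j))) :=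
          (EuclideanSpace.equiv (Fin n) ℂ).symm.differentiable.comp
            ((differentiable_const _).add
              ((LinearMap.single ℂ (fun _ : Fin n => ℂ) j).toContinuousLinearMap.differentiable.comp
                (differentiable_id.sub_const _)))
        intro y hy
        have hgeq : g = fun y : ℂ => f ((EuclideanSpace.equiv (Fin n) ℂ).symm
            ((x : Fin n → ℂ) + (LinearMap.single ℂ (fun _ : Fin n => ℂ) j).toContinuousLinearMap (y - x j))) := by
          funext y'
          show f (WithLp.toLp 2 (Function.update x j y')) = _
          rw [← hpteq y']
        have hdf : DifferentiableAt ℂ f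
            (WithLp.toLp 2 (Function.update x j y)) :=
          hd _ (fun i => hupd y i (mem_closedBall.1 hy))
        rw [← hpteq y] at hdf
        rw [hgeq]
        exact DifferentiableAt.comp y hdf (hm.differentiableAt)
      have hgsub := disc_submean_lintegral hρ hgd
      have hxj : x j = z j := hcen j (Finset.mem_insert_self j s)
      have hgz : g (z j) = f (WithLp.toLp 2 x) := by
        rw [hg]; simp only [← hxj, Function.update_eq_self]
      calc ENNReal.ofReal ((π * ρ^2)^(insert j s).card) * ‖f (WithLp.toLp 2 x)‖₊
          = ENNReal.ofReal ((π * ρ^2)^s.card) * (ENNReal.ofReal (π * ρ^2) * ‖g (z j)‖₊) := by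
            rw [Finset.card_insert_of_notMem hj, pow_succ, ENNReal.ofReal_mul (by positivity),
              hgz, mul_assoc]
        _ ≤ ENNReal.ofReal ((π * ρ^2)^s.card) * ∫⁻ y in ball (z j) ρ, (‖g y‖₊ : ENNReal) :=
            mul_le_mul_right hgsub _
        _ = ∫⁻ y in ball (z j) ρ, ENNReal.ofReal ((π * ρ^2)^s.card) * (‖g y‖₊ : ENNReal) :=
            (lintegral_const_mul' _ _ ENNReal.ofReal_ne_top).symm
        _ ≤ ∫⁻ y in ball (z j) ρ, (∫⋯∫⁻_s, F ∂(fun _ => (volume : Measure ℂ)))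
              (Function.update x j y) := by
            apply setLIntegral_mono' measurableSet_ball
            intro y hy
            apply ih (Function.update x j y)
            · intro i
              by_cases hij : i = j
              · subst hij; rw [Function.update_self]; exact hy
              · rw [Function.update_of_ne hij]; exact hx i
            · intro i hi
              have hij : i ≠ j := by rintro rfl; exact hj hi
              rw [Function.update_of_ne hij]
              exact hcen i (Finset.mem_insert_of_mem hi)
        _ ≤ ∫⁻ y, (∫⋯∫⁻_s, F ∂(fun _ => (volume : Measure ℂ))) (Function.update x j y) :=
            setLIntegral_le_lintegral _ _
  have hzmem : ∀ i, (WithLp.ofLp z) i ∈ ball (z i) ρ := fun i => mem_ball_self hρ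
  have hkey := key Finset.univ (WithLp.ofLp z) hzmem (fun i _ => rfl)
  rw [lmarginal_univ] at hkey
  simp only [Finset.card_univ, Fintype.card_fin] at hkey
  calc ENNReal.ofReal ((π * ρ^2)^n) * ‖f z‖₊
      ≤ ∫⁻ w, F w ∂(Measure.pi fun _ : Fin n => (volume : Measure ℂ)) := hkey
    _ = ∫⁻ w in Q, (‖f (WithLp.toLp 2 w)‖₊ : ENNReal) ∂(Measure.pi fun _ : Fin n => (volume : Measure ℂ)) := by
        rw [hF, lintegral_indicator (hQopen.measurableSet)]

/-- Engliš-type asymptotics for the weighted Bergman kernel on the diagonal: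
if `G ⊆ ℂⁿ` is a nonempty bounded open set, `z ∈ G`, and for `t > 0`
`S t` denotes the supremum of `|f z|²` over holomorphic `f` on `G` with
`∫_G |f|² e^{-t‖w‖} dV ≤ 1`, then `S t ^ (1/t) → e^{‖z‖}` as `t → ∞`. -/
theorem weighted_bergman_diagonal_asymptotics (n : ℕ)
    (G : Set (EuclideanSpace ℂ (Fin n))) (hG : IsOpen G)
    (hGb : Bornology.IsBounded G) (hGne : G.Nonempty)
    (z : EuclideanSpace ℂ (Fin n)) (hz : z ∈ G) :
    Tendsto
      (fun t : ℝ =>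
        (sSup {s : ℝ | ∃ f : EuclideanSpace ℂ (Fin n) → ℂ,
          DifferentiableOn ℂ f G ∧
          (∫⁻ w in G, (‖f w‖₊ : ENNReal) ^ 2 *
            ENNReal.ofReal (Real.exp (-t * ‖w‖))) ≤ 1 ∧
          s = ‖f z‖ ^ 2}) ^ (1 / t))
      atTop (nhds (Real.exp ‖z‖)) := by
  classical
  set A : ℝ → Set ℝ := fun t => {s : ℝ | ∃ f : EuclideanSpace ℂ (Fin n) → ℂ,
      DifferentiableOn ℂ f G ∧
      (∫⁻ w in G, (‖f w‖₊ : ENNReal) ^ 2 *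
        ENNReal.ofReal (Real.exp (-t * ‖w‖))) ≤ 1 ∧
      s = ‖f z‖ ^ 2} with hA
  have hvol : (volume : Measure (EuclideanSpace ℂ (Fin n)))
      = Measure.map ⇑(MeasurableEquiv.toLp 2 (Fin n → ℂ))
        (Measure.pi (fun _ : Fin n => (volume : Measure ℂ))) := rfl
  -- a closed ball around z inside G
  obtain ⟨ε, hε0, hεG⟩ := Metric.isOpen_iff.1 hG z hz
  set r : ℝ := ε/2 with hrdef
  have hr0 : 0 < r := by positivity
  have hrG : closedBall z r ⊆ G := (closedBall_subset_ball (by linarith)).trans hεG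
  -- closed polydiscs of polyradius r'/(n+1) are inside the euclidean ball of radius r'
  have hpoly_sub : ∀ r' : ℝ, 0 < r' → ∀ w : EuclideanSpace ℂ (Fin n),
      (∀ i, w i ∈ closedBall (z i) (r'/(n+1))) → w ∈ closedBall z r' := by
    intro r' hr' w hw
    rw [mem_closedBall, dist_eq_norm]
    have hb : ∀ i, ‖(w - z) i‖ ^ 2 ≤ (r'/(n+1))^2 := by
      intro i
      have h1 : dist (w i) (z i) ≤ r'/(n+1) := hw i
      rw [dist_eq_norm] at h1
      have h2 : ‖(w - z) i‖ = ‖w i - z i‖ := rfl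
      rw [h2]
      exact pow_le_pow_left₀ (norm_nonneg _) h1 2
    rw [EuclideanSpace.norm_eq]
    have hsum : ∑ i, ‖(w - z) i‖ ^ 2 ≤ (n : ℝ) * (r'/(n+1))^2 := by
      calc ∑ i, ‖(w - z) i‖ ^ 2 ≤ ∑ _i : Fin n, (r'/(n+1))^2 :=
            Finset.sum_le_sum (fun i _ => hb i)
        _ = (n : ℝ) * (r'/(n+1))^2 := by simp [Finset.sum_const, mul_comm]
    calc Real.sqrt (∑ i, ‖(w - z) i‖ ^ 2) ≤ Real.sqrt (r'^2) := by
          apply Real.sqrt_le_sqrt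
          refine hsum.trans ?_
          have hpos : (0:ℝ) < ((n:ℝ)+1)^2 := by positivity
          rw [div_pow, ← mul_div_assoc, div_le_iff₀ hpos]
          have hn0 : (0:ℝ) ≤ (n:ℝ) := Nat.cast_nonneg n
          nlinarith [sq_nonneg r', mul_nonneg (sq_nonneg r') hn0]
      _ = r' := Real.sqrt_sq hr'.le
  -- the upper bound
  have hupper : ∀ r' : ℝ, 0 < r' → closedBall z r' ⊆ G → ∀ t : ℝ, 0 ≤ t → ∀ s ∈ A t,
      s ≤ Real.exp (t * (‖z‖ + r')) / (π * (r'/(n+1))^2)^n := by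
    intro r' hr' hsub t ht s hs
    obtain ⟨f, hfd, hfint, rfl⟩ := hs
    set ρ : ℝ := r'/(n+1) with hρdef
    have hρ0 : 0 < ρ := by positivity
    have hC0 : (0:ℝ) < (π * ρ^2)^n := by positivity
    have hd2 : ∀ x : EuclideanSpace ℂ (Fin n), (∀ i, x i ∈ closedBall (z i) ρ) →
        DifferentiableAt ℂ (fun w => f w * f w) x := by
      intro x hxP
      have hxG : x ∈ G := hsub (hpoly_sub r' hr' x hxP)
      have h1 := hfd.differentiableAt (hG.mem_nhds hxG)
      exact h1.mul h1
    have hkey := polydisc_submean n (z := z) hρ0 hd2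
    set P : Set (EuclideanSpace ℂ (Fin n)) := WithLp.ofLp ⁻¹' Set.univ.pi (fun i => ball (z i) ρ) with hP
    have hPcb : P ⊆ closedBall z r' := fun w hw =>
      hpoly_sub r' hr' w (fun i => ball_subset_closedBall (hw i (Set.mem_univ i)))
    have hPsubG : P ⊆ G := fun w hw => hsub (hPcb hw)
    have hPnorm : ∀ w ∈ P, ‖w‖ ≤ ‖z‖ + r' := by
      intro w hw
      have h1 : dist w z ≤ r' := hPcb hw
      have h2 := norm_sub_norm_le w z
      rw [← dist_eq_norm] at h2
      linarith
    have hPmeas : MeasurableSet P :=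
      (MeasurableSet.univ_pi (fun i => measurableSet_ball)).preimage (WithLp.measurable_ofLp 2 _)
    have hkey' : ENNReal.ofReal ((π * ρ^2)^n) * ‖f z * f z‖₊ ≤
        ∫⁻ w in P, (‖f w * f w‖₊ : ENNReal) := by
      rw [hvol, MeasurableEquiv.restrict_map, lintegral_map_equiv]
      exact hkey
    have hchain : (∫⁻ w in P, (‖f w * f w‖₊ : ENNReal))
        ≤ ENNReal.ofReal (Real.exp (t * (‖z‖ + r'))) := by
      calc ∫⁻ w in P, (‖f w * f w‖₊ : ENNReal)
          ≤ ∫⁻ w in P, ENNReal.ofReal (Real.exp (t * (‖z‖ + r'))) *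
              ((‖f w‖₊ : ENNReal)^2 * ENNReal.ofReal (Real.exp (-t * ‖w‖))) := by
            apply setLIntegral_mono' hPmeas
            intro w hw
            have hsq : (‖f w * f w‖₊ : ENNReal) = (‖f w‖₊ : ENNReal)^2 := by
              rw [nnnorm_mul]; push_cast; ring
            rw [hsq]
            have h1 : (1:ENNReal) ≤ ENNReal.ofReal (Real.exp (t * (‖z‖ + r'))) *
                ENNReal.ofReal (Real.exp (-t * ‖w‖)) := by
              rw [← ENNReal.ofReal_mul (Real.exp_nonneg _), ← Real.exp_add,
                show (1:ENNReal) = ENNReal.ofReal 1 by simp]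
              apply ENNReal.ofReal_le_ofReal
              rw [Real.one_le_exp_iff]
              nlinarith [mul_nonneg ht (sub_nonneg.2 (hPnorm w hw))]
            calc ((‖f w‖₊ : ENNReal))^2 = 1 * (‖f w‖₊ : ENNReal)^2 := (one_mul _).symm
              _ ≤ (ENNReal.ofReal (Real.exp (t * (‖z‖ + r'))) *
                    ENNReal.ofReal (Real.exp (-t * ‖w‖))) * (‖f w‖₊ : ENNReal)^2 :=
                  mul_le_mul_left h1 _
              _ = ENNReal.ofReal (Real.exp (t * (‖z‖ + r'))) *
                    ((‖f w‖₊ : ENNReal)^2 * ENNReal.ofReal (Real.exp (-t * ‖w‖))) := by ring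
          _ = ENNReal.ofReal (Real.exp (t * (‖z‖ + r'))) *
              ∫⁻ w in P, (‖f w‖₊ : ENNReal)^2 * ENNReal.ofReal (Real.exp (-t * ‖w‖)) :=
            lintegral_const_mul' _ _ ENNReal.ofReal_ne_top
          _ ≤ ENNReal.ofReal (Real.exp (t * (‖z‖ + r'))) *
              ∫⁻ w in G, (‖f w‖₊ : ENNReal)^2 * ENNReal.ofReal (Real.exp (-t * ‖w‖)) :=
            mul_le_mul_right (lintegral_mono_set hPsubG) _
          _ ≤ ENNReal.ofReal (Real.exp (t * (‖z‖ + r'))) * 1 := mul_le_mul_right hfint _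
          _ = ENNReal.ofReal (Real.exp (t * (‖z‖ + r'))) := mul_one _
    have hofr : (‖f z * f z‖₊ : ENNReal) = ENNReal.ofReal (‖f z‖^2) := by
      rw [← enorm_eq_nnnorm, ← ofReal_norm]
      congr 1
      rw [norm_mul]
      ring
    have hfin : ENNReal.ofReal ((π * ρ^2)^n * ‖f z‖^2)
        ≤ ENNReal.ofReal (Real.exp (t * (‖z‖ + r'))) := by
      rw [ENNReal.ofReal_mul hC0.le, ← hofr]
      exact le_trans hkey' hchain
    have hreal : (π * ρ^2)^n * ‖f z‖^2 ≤ Real.exp (t * (‖z‖ + r')) :=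
      (ENNReal.ofReal_le_ofReal_iff (Real.exp_nonneg _)).1 hfin
    rw [le_div_iff₀ hC0]
    linarith
  -- 0 is in every A t
  have h0mem : ∀ t : ℝ, (0:ℝ) ∈ A t := by
    intro t
    refine ⟨fun _ => 0, differentiableOn_const 0, ?_, by simp⟩
    have he : ∀ w : EuclideanSpace ℂ (Fin n),
        (‖(0:ℂ)‖₊ : ENNReal) ^ 2 * ENNReal.ofReal (Real.exp (-t * ‖w‖)) = 0 := fun w => by simp
    rw [lintegral_congr he, lintegral_zero]
    exact zero_le_one
  have hbdd : ∀ t : ℝ, 0 ≤ t → BddAbove (A t) := fun t ht =>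
    ⟨_, fun s hs => hupper r hr0 hrG t ht s hs⟩
  have hS0 : ∀ t : ℝ, 0 ≤ t → 0 ≤ sSup (A t) := fun t ht => le_csSup (hbdd t ht) (h0mem t)
  -- the volume of G is positive and finite
  have hρr : (0:ℝ) < r/(n+1) := by positivity
  have hV0 : volume G ≠ 0 := by
    intro hV
    have hPsub : (WithLp.ofLp ⁻¹' Set.univ.pi (fun i => ball (z i) (r/(n+1))) : Set (EuclideanSpace ℂ (Fin n))) ⊆ G :=
      fun w hw => hrG (hpoly_sub r hr0 w (fun i => ball_subset_closedBall (hw i (Set.mem_univ i))))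
    have h1 : volume (WithLp.ofLp ⁻¹' Set.univ.pi (fun i => ball (z i) (r/(n+1))) : Set (EuclideanSpace ℂ (Fin n))) ≤ volume G := measure_mono hPsub
    rw [hV] at h1
    have h2 : volume (WithLp.ofLp ⁻¹' Set.univ.pi (fun i => ball (z i) (r/(n+1))) : Set (EuclideanSpace ℂ (Fin n)))
        = ∏ i : Fin n, volume (ball (z i) (r/(n+1))) := by
      rw [hvol, MeasurableEquiv.map_apply]
      exact Measure.pi_pi _ _
    rw [h2] at h1
    have h3 : ∀ i : Fin n, volume (ball (z i) (r/(n+1))) ≠ 0 :=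
      fun i => (measure_ball_pos volume (z i) hρr).ne'
    exact (Finset.prod_ne_zero_iff.2 fun i _ => h3 i) (le_antisymm h1 zero_le)
  have hVtop : volume G ≠ ⊤ := by
    obtain ⟨R, hR⟩ := hGb.subset_closedBall 0
    have hsub2 : G ⊆ (WithLp.ofLp ⁻¹' Set.univ.pi (fun _ => closedBall (0:ℂ) R) : Set (EuclideanSpace ℂ (Fin n))) := by
      intro w hw
      intro i _
      have h1 : ‖w‖ ≤ R := by
        have := hR hw
        rwa [mem_closedBall, dist_zero_right] at this
      have h2 : ‖w i‖ ≤ ‖w‖ := by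
        rw [EuclideanSpace.norm_eq]
        have h3 : ‖w i‖^2 ≤ ∑ j, ‖w j‖^2 :=
          Finset.single_le_sum (f := fun j => ‖w j‖^2) (fun j _ => sq_nonneg _) (Finset.mem_univ i)
        calc ‖w i‖ = Real.sqrt (‖w i‖^2) := (Real.sqrt_sq (norm_nonneg _)).symm
          _ ≤ Real.sqrt (∑ j, ‖w j‖^2) := Real.sqrt_le_sqrt h3
      rw [mem_closedBall, dist_zero_right]
      exact h2.trans h1
    have h4 : volume (WithLp.ofLp ⁻¹' Set.univ.pi (fun _ => closedBall (0:ℂ) R) : Set (EuclideanSpace ℂ (Fin n)))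
        = ∏ _i : Fin n, volume (closedBall (0:ℂ) R) := by
      rw [hvol, MeasurableEquiv.map_apply]; exact Measure.pi_pi _ _
    have h5 : volume G ≤ ∏ _i : Fin n, volume (closedBall (0:ℂ) R) := h4 ▸ measure_mono hsub2
    refine ne_top_of_le_ne_top ?_ h5
    exact (ENNReal.prod_lt_top (fun i _ => measure_closedBall_lt_top)).ne
  set VG : ℝ := (volume G).toReal with hVGdef
  have hVGpos : 0 < VG := ENNReal.toReal_pos hV0 hVtop
  set a : ℝ := VG⁻¹ with hadef
  have ha0 : 0 < a := by positivity
  -- lower bound for sSup (A t)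
  have hlow : ∀ t : ℝ, 0 ≤ t → a * Real.exp (t * ‖z‖) ≤ sSup (A t) := by
    intro t ht
    set β : ℝ := ‖z‖⁻¹ with hβdef
    set ft : EuclideanSpace ℂ (Fin n) → ℂ := fun w =>
      (Real.sqrt a : ℂ) * Complex.exp ((((t/2) * β : ℝ) : ℂ) * (inner ℂ z w : ℂ)) with hft
    have hdiff : DifferentiableOn ℂ ft G := by
      have h1 : Differentiable ℂ (fun w : EuclideanSpace ℂ (Fin n) => (innerSL ℂ z) w) :=
        (innerSL ℂ z).differentiable
      have h2 : Differentiable ℂ ft := by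
        apply Differentiable.const_mul
        apply Differentiable.cexp
        exact h1.const_mul _
      exact h2.differentiableOn
    have hnorm : ∀ w, ‖ft w‖ = Real.sqrt a * Real.exp ((t/2) * β * (inner ℂ z w : ℂ).re) := by
      intro w
      rw [hft]
      rw [norm_mul, Complex.norm_real, Real.norm_eq_abs, abs_of_nonneg (Real.sqrt_nonneg _),
        Complex.norm_exp]
      congr 2
      rw [Complex.re_ofReal_mul]
    have hRe : ∀ w : EuclideanSpace ℂ (Fin n), β * (inner ℂ z w : ℂ).re ≤ ‖w‖ := by
      intro w
      rcases eq_or_ne ‖z‖ 0 with h0 | h0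
      · have hz0 : z = 0 := norm_eq_zero.1 h0
        rw [hβdef, h0]
        simp [hz0]
      · have h1 : (inner ℂ z w : ℂ).re ≤ ‖z‖ * ‖w‖ := by
          refine le_trans (Complex.re_le_norm _) ?_
          exact norm_inner_le_norm z w
        have hβ : 0 ≤ β := by rw [hβdef]; positivity
        calc β * (inner ℂ z w : ℂ).re ≤ β * (‖z‖ * ‖w‖) := mul_le_mul_of_nonneg_left h1 hβ
          _ = ‖w‖ := by rw [hβdef]; field_simp
    have hRez : β * (inner ℂ z z : ℂ).re = ‖z‖ := by
      have h1 : (inner ℂ z z : ℂ) = (‖z‖:ℂ)^2 := inner_self_eq_norm_sq_to_K z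
      rw [h1]
      have h2 : ((‖z‖:ℂ)^2).re = ‖z‖^2 := by
        rw [← Complex.ofReal_pow, Complex.ofReal_re]
      rw [h2]
      rcases eq_or_ne ‖z‖ 0 with h0 | h0
      · rw [hβdef, h0]; simp
      · rw [hβdef]; field_simp
    have hptwise : ∀ w : EuclideanSpace ℂ (Fin n),
        (‖ft w‖₊ : ENNReal)^2 * ENNReal.ofReal (Real.exp (-t * ‖w‖)) ≤ ENNReal.ofReal a := by
      intro w
      have h2 : (‖ft w‖₊ : ENNReal)^2 * ENNReal.ofReal (Real.exp (-t*‖w‖))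
          = ENNReal.ofReal (‖ft w‖^2 * Real.exp (-t*‖w‖)) := by
        rw [ENNReal.ofReal_mul (by positivity), ENNReal.ofReal_pow (norm_nonneg _),
          ofReal_norm, enorm_eq_nnnorm]
      rw [h2]
      apply ENNReal.ofReal_le_ofReal
      rw [hnorm w, mul_pow, Real.sq_sqrt ha0.le]
      have h3 : (Real.exp ((t/2) * β * (inner ℂ z w : ℂ).re))^2 * Real.exp (-t * ‖w‖)
          = Real.exp (t * (β * (inner ℂ z w : ℂ).re - ‖w‖)) := by
        rw [sq, ← Real.exp_add, ← Real.exp_add]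
        congr 1
        ring
      rw [mul_assoc, h3]
      have h4 : Real.exp (t * (β * (inner ℂ z w : ℂ).re - ‖w‖)) ≤ 1 := by
        rw [Real.exp_le_one_iff]
        have h5 : β * (inner ℂ z w : ℂ).re - ‖w‖ ≤ 0 := sub_nonpos.2 (hRe w)
        exact mul_nonpos_of_nonneg_of_nonpos ht h5
      calc a * Real.exp (t * (β * (inner ℂ z w : ℂ).re - ‖w‖)) ≤ a * 1 :=
            mul_le_mul_of_nonneg_left h4 ha0.le
        _ = a := mul_one a
    have hintle : (∫⁻ w in G, (‖ft w‖₊ : ENNReal) ^ 2 *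
        ENNReal.ofReal (Real.exp (-t * ‖w‖))) ≤ 1 := by
      calc (∫⁻ w in G, (‖ft w‖₊ : ENNReal) ^ 2 * ENNReal.ofReal (Real.exp (-t * ‖w‖)))
          ≤ ∫⁻ _w in G, ENNReal.ofReal a := setLIntegral_mono' hG.measurableSet
            (fun w _ => hptwise w)
        _ = ENNReal.ofReal a * volume G := by rw [setLIntegral_const]
        _ = 1 := by
            rw [hadef, ENNReal.ofReal_inv_of_pos hVGpos, hVGdef,
              ENNReal.ofReal_toReal hVtop]
            exact ENNReal.inv_mul_cancel hV0 hVtop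
    have hval : ‖ft z‖^2 = a * Real.exp (t * ‖z‖) := by
      rw [hnorm z, mul_pow, Real.sq_sqrt ha0.le]
      congr 1
      rw [sq, ← Real.exp_add]
      rw [← hRez]
      congr 1
      ring
    exact le_csSup (hbdd t ht) ⟨ft, hdiff, hintle, hval.symm⟩
  have hSle : ∀ r' : ℝ, 0 < r' → closedBall z r' ⊆ G → ∀ t : ℝ, 0 ≤ t →
      sSup (A t) ≤ Real.exp (t * (‖z‖ + r')) / (π * (r'/(n+1))^2)^n :=
    fun r' h1 h2 t ht => csSup_le ⟨0, h0mem t⟩ (hupper r' h1 h2 t ht)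
  show Tendsto (fun t : ℝ => (sSup (A t)) ^ (1/t)) atTop (nhds (Real.exp ‖z‖))
  rw [tendsto_order]
  constructor
  · intro b hb
    have h1 : Tendsto (fun t : ℝ => 1/t) atTop (nhds 0) := by
      simpa only [one_div] using tendsto_inv_atTop_zero
    have hφ : Tendsto (fun t : ℝ => Real.exp ‖z‖ * Real.exp (Real.log a * (1/t))) atTop
        (nhds (Real.exp ‖z‖)) := by
      have h2 : Tendsto (fun t : ℝ => Real.log a * (1/t)) atTop (nhds 0) := by
        simpa using h1.const_mul (Real.log a)
      have h3 := (Real.continuous_exp.tendsto 0).comp h2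
      rw [Real.exp_zero] at h3
      simpa using h3.const_mul (Real.exp ‖z‖)
    have hev1 : ∀ᶠ t : ℝ in atTop, b < Real.exp ‖z‖ * Real.exp (Real.log a * (1/t)) :=
      hφ.eventually (eventually_gt_nhds hb)
    filter_upwards [hev1, eventually_gt_atTop 0] with t hbt ht0
    have key : Real.exp ‖z‖ * Real.exp (Real.log a * (1/t)) = (a * Real.exp (t * ‖z‖)) ^ (1/t) := by
      rw [Real.rpow_def_of_pos (by positivity), Real.log_mul (ne_of_gt ha0) (Real.exp_ne_zero _),
        Real.log_exp, ← Real.exp_add]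
      congr 1
      field_simp
      ring
    have hmono : (a * Real.exp (t * ‖z‖)) ^ (1/t) ≤ (sSup (A t)) ^ (1/t) :=
      Real.rpow_le_rpow (by positivity) (hlow t ht0.le) (by positivity)
    calc b < Real.exp ‖z‖ * Real.exp (Real.log a * (1/t)) := hbt
      _ = (a * Real.exp (t * ‖z‖)) ^ (1/t) := key
      _ ≤ (sSup (A t)) ^ (1/t) := hmono
  · intro b hb
    have hb0 : (0:ℝ) < b := lt_trans (Real.exp_pos _) hb
    have hzb : ‖z‖ < Real.log b := (Real.lt_log_iff_exp_lt hb0).2 hb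
    set r' : ℝ := min r ((Real.log b - ‖z‖)/2) with hr'def
    have hr'0 : 0 < r' := lt_min hr0 (by linarith)
    have hr'G : closedBall z r' ⊆ G :=
      (closedBall_subset_closedBall (min_le_left _ _)).trans hrG
    have hzr' : ‖z‖ + r' < Real.log b := by
      have h2 := min_le_right r ((Real.log b - ‖z‖)/2)
      have : r' ≤ (Real.log b - ‖z‖)/2 := h2
      linarith
    have hexp : Real.exp (‖z‖ + r') < b := by
      have h1 : Real.exp (‖z‖ + r') < Real.exp (Real.log b) := Real.exp_lt_exp.2 hzr'
      rwa [Real.exp_log hb0] at h1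
    set B : ℝ := (π * (r'/(n+1))^2)^n with hBdef
    have hB0 : 0 < B := by positivity
    have h1 : Tendsto (fun t : ℝ => 1/t) atTop (nhds 0) := by
      simpa only [one_div] using tendsto_inv_atTop_zero
    have hψ : Tendsto (fun t : ℝ => Real.exp (‖z‖ + r') * Real.exp (Real.log B⁻¹ * (1/t)))
        atTop (nhds (Real.exp (‖z‖ + r'))) := by
      have h2 : Tendsto (fun t : ℝ => Real.log B⁻¹ * (1/t)) atTop (nhds 0) := by
        simpa using h1.const_mul (Real.log B⁻¹)
      have h3 := (Real.continuous_exp.tendsto 0).comp h2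
      rw [Real.exp_zero] at h3
      simpa using h3.const_mul (Real.exp (‖z‖ + r'))
    have hev1 : ∀ᶠ t : ℝ in atTop,
        Real.exp (‖z‖ + r') * Real.exp (Real.log B⁻¹ * (1/t)) < b :=
      hψ.eventually (eventually_lt_nhds hexp)
    filter_upwards [hev1, eventually_gt_atTop 0] with t hbt ht0
    have key : Real.exp (‖z‖ + r') * Real.exp (Real.log B⁻¹ * (1/t))
        = (Real.exp (t * (‖z‖ + r')) / B) ^ (1/t) := by
      rw [div_eq_mul_inv (Real.exp (t * (‖z‖ + r'))) B, Real.rpow_def_of_pos (by positivity),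
        Real.log_mul (Real.exp_ne_zero _) (ne_of_gt (inv_pos.2 hB0)), Real.log_exp, ← Real.exp_add]
      congr 1
      field_simp
    have hmono : (sSup (A t)) ^ (1/t) ≤ (Real.exp (t * (‖z‖ + r')) / B) ^ (1/t) :=
      Real.rpow_le_rpow (hS0 t ht0.le) (hSle r' hr'0 hr'G t ht0.le) (by positivity)
    calc (sSup (A t)) ^ (1/t) ≤ (Real.exp (t * (‖z‖ + r')) / B) ^ (1/t) := hmono
      _ = Real.exp (‖z‖ + r') * Real.exp (Real.log B⁻¹ * (1/t)) := key.symm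
      _ < b := hbt
end

section
/- Let k ≥ 1 be a natural number. The function F : ℂ³ → ℝ defined by F(z₁,z₂,z₃) = (|z₁|² + |z₂|² + |z₃|²)^{2k} + ∑_{ε ∈ {−1,1}³} (ε₁|z₁| + ε₂|z₂| + ε₃|z₃|)^{2k} (the sum running over all 8 choices of signs) is convex on ℂ³ (identified with ℝ⁶). -/
open Finset

/-- Even power of a linear functional is convex. -/
lemma convexOn_pow_linear {E : Type*} [AddCommGroup E] [Module ℝ E]
    (L : E →ₗ[ℝ] ℝ) {n : ℕ} (hn : Even n) :
    ConvexOn ℝ Set.univ (fun z => (L z) ^ n) := by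
  have h := (hn.convexOn_pow (𝕜 := ℝ)).comp_affineMap L.toAffineMap
  exact h

/-- The one-variable key lemma: `t ↦ (s+t)^n + (s-t)^n` is monotone on `[0,∞)` for even `n`. -/
lemma key_mono {n : ℕ} (hn : Even n) (s : ℝ) {t t' : ℝ} (ht : 0 ≤ t) (htt : t ≤ t') :
    (s + t) ^ n + (s - t) ^ n ≤ (s + t') ^ n + (s - t') ^ n := by
  have expand : ∀ u : ℝ, (s + u) ^ n + (s - u) ^ n
      = ∑ i ∈ Finset.range (n + 1),
          s ^ i * u ^ (n - i) * (n.choose i) * (1 + (-1 : ℝ) ^ (n - i)) := by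
    intro u
    rw [sub_eq_add_neg, add_pow, add_pow, ← Finset.sum_add_distrib]
    refine Finset.sum_congr rfl fun i _ => ?_
    rw [neg_pow]
    ring
  rw [expand t, expand t']
  refine Finset.sum_le_sum fun i hi => ?_
  rcases Nat.even_or_odd (n - i) with he | ho
  · have hi' : i ≤ n := Nat.lt_succ_iff.mp (Finset.mem_range.mp hi)
    have hieven : Even i := ((Nat.even_sub hi').mp he).mp hn
    have hs : (0 : ℝ) ≤ s ^ i := hieven.pow_nonneg s
    rw [he.neg_one_pow]
    apply mul_le_mul_of_nonneg_right _ (by norm_num)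
    apply mul_le_mul_of_nonneg_right _ (by positivity)
    exact mul_le_mul_of_nonneg_left (pow_le_pow_left₀ ht htt _) hs
  · rw [ho.neg_one_pow]
    norm_num

/-- The sign-sum function. -/
noncomputable def signSum (k : ℕ) (a : Fin 3 → ℝ) : ℝ :=
  ∑ ε : Fin 3 → Bool, (∑ j, (if ε j then (1 : ℝ) else -1) * a j) ^ (2 * k)

lemma signSum_update (k : ℕ) (j : Fin 3) (a : Fin 3 → ℝ) (u : ℝ) :
    signSum k (Function.update a j u)
      = ∑ ε ∈ Finset.univ.filter (fun ε : Fin 3 → Bool => ε j = true),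
          (((∑ i ∈ Finset.univ.erase j, (if ε i then (1 : ℝ) else -1) * a i) + u) ^ (2 * k)
            + ((∑ i ∈ Finset.univ.erase j, (if ε i then (1 : ℝ) else -1) * a i) - u) ^ (2 * k)) := by
  classical
  have hsum : ∀ (ε : Fin 3 → Bool),
      (∑ i, (if ε i then (1 : ℝ) else -1) * Function.update a j u i)
        = (∑ i ∈ Finset.univ.erase j, (if ε i then (1 : ℝ) else -1) * a i)
            + (if ε j then (1 : ℝ) else -1) * u := by
    intro ε
    rw [← Finset.add_sum_erase Finset.univ _ (Finset.mem_univ j), Function.update_self, add_comm]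
    congr 1
    refine Finset.sum_congr rfl fun i hi => ?_
    rw [Function.update_of_ne (Finset.ne_of_mem_erase hi)]
  unfold signSum
  rw [← Finset.sum_filter_add_sum_filter_not Finset.univ (fun ε : Fin 3 → Bool => ε j = true)]
  rw [Finset.sum_add_distrib]
  congr 1
  · refine Finset.sum_congr rfl fun ε hε => ?_
    have hεj : ε j = true := (Finset.mem_filter.mp hε).2
    rw [hsum ε, hεj]
    simp
  · refine Finset.sum_nbij' (fun ε => Function.update ε j true)
      (fun ε => Function.update ε j false) ?_ ?_ ?_ ?_ ?_
    · intro ε hε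
      simp
    · intro ε hε
      simp
    · intro ε hε
      simp only [Finset.mem_filter, Finset.mem_univ, true_and, Bool.not_eq_true] at hε
      funext i
      rcases eq_or_ne i j with rfl | h
      · simp [hε]
      · simp [Function.update_of_ne h]
    · intro ε hε
      simp only [Finset.mem_filter, Finset.mem_univ, true_and] at hε
      funext i
      rcases eq_or_ne i j with rfl | h
      · simp [hε]
      · simp [Function.update_of_ne h]
    · intro ε hε
      simp only [Finset.mem_filter, Finset.mem_univ, true_and, Bool.not_eq_true] at hε
      rw [hsum ε, hε]
      have hS : (∑ i ∈ Finset.univ.erase j,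
            (if Function.update ε j true i then (1 : ℝ) else -1) * a i)
          = ∑ i ∈ Finset.univ.erase j, (if ε i then (1 : ℝ) else -1) * a i := by
        refine Finset.sum_congr rfl fun i hi => ?_
        rw [Function.update_of_ne (Finset.ne_of_mem_erase hi)]
      rw [hS]
      norm_num [← sub_eq_add_neg]

lemma signSum_update_le (k : ℕ) (j : Fin 3) (a : Fin 3 → ℝ) {t t' : ℝ}
    (ht : 0 ≤ t) (htt : t ≤ t') :
    signSum k (Function.update a j t) ≤ signSum k (Function.update a j t') := by
  rw [signSum_update, signSum_update]
  exact Finset.sum_le_sum fun ε _ => key_mono (even_two_mul k) _ ht htt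

lemma signSum_mono (k : ℕ) {a b : Fin 3 → ℝ} (ha : ∀ j, 0 ≤ a j) (hab : ∀ j, a j ≤ b j) :
    signSum k a ≤ signSum k b := by
  have h0 := signSum_update_le k 0 a (ha 0) (hab 0)
  rw [Function.update_eq_self] at h0
  set a1 := Function.update a 0 (b 0) with ha1
  have e1 : a1 1 = a 1 := Function.update_of_ne (by decide) _ _
  have h1 := signSum_update_le k 1 a1 (ha 1) (hab 1)
  rw [← e1, Function.update_eq_self] at h1
  set a2 := Function.update a1 1 (b 1) with ha2
  have e2 : a2 2 = a 2 := by
    rw [ha2, Function.update_of_ne (by decide), ha1, Function.update_of_ne (by decide)]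
  have h2 := signSum_update_le k 2 a2 (ha 2) (hab 2)
  rw [← e2, Function.update_eq_self] at h2
  have hb : Function.update a2 2 (b 2) = b := by
    funext i
    fin_cases i <;>
      simp [ha2, ha1, Function.update_apply]
  rw [hb] at h2
  exact le_trans h0 (le_trans h1 h2)

lemma signSum_convexOn (k : ℕ) : ConvexOn ℝ Set.univ (signSum k) := by
  have hterm : ∀ ε : Fin 3 → Bool, ConvexOn ℝ Set.univ
      (fun a : Fin 3 → ℝ => (∑ j, (if ε j then (1 : ℝ) else -1) * a j) ^ (2 * k)) := by
    intro ε
    have h := convexOn_pow_linear (E := Fin 3 → ℝ)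
      (∑ j : Fin 3, (if ε j then (1 : ℝ) else -1) •
        (LinearMap.proj j : (Fin 3 → ℝ) →ₗ[ℝ] ℝ)) (even_two_mul k)
    have heq : ∀ a : Fin 3 → ℝ,
        (∑ j : Fin 3, (if ε j then (1 : ℝ) else -1) •
          (LinearMap.proj j : (Fin 3 → ℝ) →ₗ[ℝ] ℝ)) a
          = ∑ j, (if ε j then (1 : ℝ) else -1) * a j := by
      intro a
      rw [LinearMap.sum_apply]
      exact Finset.sum_congr rfl fun j _ => by
        rw [LinearMap.smul_apply, LinearMap.proj_apply, smul_eq_mul]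
    simpa only [heq] using h
  have hsum : ∀ s : Finset (Fin 3 → Bool), ConvexOn ℝ Set.univ
      (fun a : Fin 3 → ℝ => ∑ ε ∈ s, (∑ j, (if ε j then (1 : ℝ) else -1) * a j) ^ (2 * k)) := by
    intro s
    classical
    induction s using Finset.induction with
    | empty => simpa using convexOn_const 0 convex_univ
    | insert _ _ h ih =>
        simp only [Finset.sum_insert h]
        exact (hterm _).add ih
  exact hsum Finset.univ

/-- Convexity of the defining function of Nguyên Viêt Anh's domain: for `k ≥ 1`,
the function `z ↦ (|z₁|²+|z₂|²+|z₃|²)^{2k} + ∑_{ε∈{±1}³} (ε₁|z₁|+ε₂|z₂|+ε₃|z₃|)^{2k}`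
is convex on `ℂ³`. -/
theorem anh_defining_function_convex (k : ℕ) (hk : 1 ≤ k) :
    ConvexOn ℝ Set.univ
      (fun z : Fin 3 → ℂ =>
        (∑ j, ‖z j‖ ^ 2) ^ (2 * k) +
        ∑ ε : Fin 3 → Bool,
          (∑ j, (if ε j then (1 : ℝ) else -1) * ‖z j‖) ^ (2 * k)) := by
  have hj : ∀ j : Fin 3, ConvexOn ℝ Set.univ
      (fun z : Fin 3 → ℂ => ‖z j‖ ^ 2) := by
    intro j
    set P : (Fin 3 → ℂ) →ₗ[ℝ] ℂ :=
      (LinearMap.proj j : (Fin 3 → ℂ) →ₗ[ℂ] ℂ).restrictScalars ℝ with hP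
    have hre := convexOn_pow_linear (Complex.reLm.comp P) (even_two)
    have him := convexOn_pow_linear (Complex.imLm.comp P) (even_two)
    have h : ConvexOn ℝ Set.univ (fun z : Fin 3 → ℂ =>
        ((Complex.reLm.comp P) z) ^ 2 + ((Complex.imLm.comp P) z) ^ 2) := hre.add him
    have heq : (fun z : Fin 3 → ℂ =>
        ((Complex.reLm.comp P) z) ^ 2 + ((Complex.imLm.comp P) z) ^ 2)
        = fun z : Fin 3 → ℂ => ‖z j‖ ^ 2 := by
      funext z
      rw [Complex.sq_norm]
      simp [Complex.normSq_apply, hP, sq]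
    rwa [heq] at h
  have hq : ConvexOn ℝ Set.univ (fun z : Fin 3 → ℂ => ∑ j, ‖z j‖ ^ 2) := by
    have heq : (fun z : Fin 3 → ℂ => ∑ j, ‖z j‖ ^ 2)
        = fun z => ‖z 0‖ ^ 2 + ‖z 1‖ ^ 2 + ‖z 2‖ ^ 2 :=
      funext fun z => Fin.sum_univ_three _
    rw [heq]
    exact ((hj 0).add (hj 1)).add (hj 2)
  have h1 : ConvexOn ℝ Set.univ
      (fun z : Fin 3 → ℂ => (∑ j, ‖z j‖ ^ 2) ^ (2 * k)) := by
    refine ⟨convex_univ, fun x _ y _ p q hp hq0 hpq => ?_⟩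
    have hQnn : (0 : ℝ) ≤ ∑ j, ‖(p • x + q • y) j‖ ^ 2 :=
      Finset.sum_nonneg fun j _ => sq_nonneg _
    have hQle : (∑ j, ‖(p • x + q • y) j‖ ^ 2)
        ≤ p * (∑ j, ‖x j‖ ^ 2) + q * (∑ j, ‖y j‖ ^ 2) := by
      have := hq.2 (Set.mem_univ x) (Set.mem_univ y) hp hq0 hpq
      simpa [smul_eq_mul] using this
    calc (∑ j, ‖(p • x + q • y) j‖ ^ 2) ^ (2 * k)
        ≤ (p * (∑ j, ‖x j‖ ^ 2) + q * (∑ j, ‖y j‖ ^ 2)) ^ (2 * k) :=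
          pow_le_pow_left₀ hQnn hQle _
      _ ≤ p * (∑ j, ‖x j‖ ^ 2) ^ (2 * k)
            + q * (∑ j, ‖y j‖ ^ 2) ^ (2 * k) := by
          have := (Even.convexOn_pow (𝕜 := ℝ) (even_two_mul k)).2
            (Set.mem_univ (∑ j, ‖x j‖ ^ 2))
            (Set.mem_univ (∑ j, ‖y j‖ ^ 2)) hp hq0 hpq
          simpa [smul_eq_mul] using this
  have h2 : ConvexOn ℝ Set.univ
      (fun z : Fin 3 → ℂ => ∑ ε : Fin 3 → Bool,
        (∑ j, (if ε j then (1 : ℝ) else -1) * ‖z j‖) ^ (2 * k)) := by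
    refine ⟨convex_univ, fun x _ y _ p q hp hq0 hpq => ?_⟩
    show signSum k (fun j => ‖(p • x + q • y) j‖) ≤ _
    have step1 : signSum k (fun j => ‖(p • x + q • y) j‖)
        ≤ signSum k (fun j => p * ‖x j‖ + q * ‖y j‖) := by
      refine signSum_mono k (fun j => by positivity) (fun j => ?_)
      calc ‖(p • x + q • y) j‖
          = ‖(p : ℂ) * x j + (q : ℂ) * y j‖ := by
            simp [Complex.real_smul]
        _ ≤ ‖(p : ℂ) * x j‖ + ‖(q : ℂ) * y j‖ :=
            norm_add_le _ _
        _ = p * ‖x j‖ + q * ‖y j‖ := by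
            rw [norm_mul, norm_mul, Complex.norm_real, Complex.norm_real, Real.norm_eq_abs,
              Real.norm_eq_abs, abs_of_nonneg hp, abs_of_nonneg hq0]
    have step2 : signSum k (fun j => p * ‖x j‖ + q * ‖y j‖)
        ≤ p * signSum k (fun j => ‖x j‖)
          + q * signSum k (fun j => ‖y j‖) := by
      have := (signSum_convexOn k).2 (Set.mem_univ (fun j => ‖x j‖))
        (Set.mem_univ (fun j => ‖y j‖)) hp hq0 hpq
      simpa [Pi.add_def, Pi.smul_def, smul_eq_mul] using this
    calc signSum k (fun j => ‖(p • x + q • y) j‖)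
        ≤ _ := step1
      _ ≤ _ := step2
  exact h1.add h2
end

section
/- For each natural number k ≥ 1, let Ω_k = {(z₁,z₂) ∈ ℂ² : |z₂|^{2k}(1+|z₁|)^{2k} + |z₂|^{2k}(1−|z₁|)^{2k} + ((|z₁|²+|z₂|²)/k)^{k} < 1}, and let D = {(z₁,z₂) ∈ ℂ² : |z₂| < 1/(1+|z₁|)}. Then Ω_k ⊆ D for every k ≥ 1, and ⋃_{k≥1} Ω_k = D. -/
/-- Nguyên Viêt Anh's algebraic approximating domains. -/
def anhDomain (k : ℕ) : Set (ℂ × ℂ) :=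
  {p : ℂ × ℂ |
    ‖p.2‖ ^ (2 * k) * (1 + ‖p.1‖) ^ (2 * k) +
    ‖p.2‖ ^ (2 * k) * (1 - ‖p.1‖) ^ (2 * k) +
    ((‖p.1‖ ^ 2 + ‖p.2‖ ^ 2) / (k : ℝ)) ^ k < 1}

/-- The limiting degenerate domain `{(z₁,z₂) : |z₂| < 1/(1+|z₁|)}`. -/
def limitDomain : Set (ℂ × ℂ) :=
  {p : ℂ × ℂ | ‖p.2‖ < 1 / (1 + ‖p.1‖)}

/-- The domains `Ω_k` approximate `D = {|z₂| < 1/(1+|z₁|)}` from inside: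
each `Ω_k` (for `k ≥ 1`) is contained in `D`, and their union is `D`. -/
theorem anh_domains_exhaust :
    (∀ k : ℕ, 1 ≤ k → anhDomain k ⊆ limitDomain) ∧
    (⋃ k ∈ {k : ℕ | 1 ≤ k}, anhDomain k) = limitDomain := by
  have key : ∀ k : ℕ, 1 ≤ k → anhDomain k ⊆ limitDomain := by
    intro k hk p hp
    simp only [anhDomain, Set.mem_setOf_eq] at hp
    set a := ‖p.1‖ with ha_def
    set b := ‖p.2‖ with hb_def
    have ha : 0 ≤ a := norm_nonneg _
    have hb : 0 ≤ b := norm_nonneg _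
    have h1a : (0:ℝ) < 1 + a := by linarith
    have t2 : 0 ≤ b ^ (2*k) * (1 - a) ^ (2*k) :=
      mul_nonneg (pow_nonneg hb _) ((even_two_mul k).pow_nonneg _)
    have t3 : 0 ≤ ((a ^ 2 + b ^ 2) / (k:ℝ)) ^ k := by positivity
    have h2 : (b * (1 + a)) ^ (2*k) < 1 := by
      rw [mul_pow]; linarith
    have hlt : b * (1 + a) < 1 := by
      by_contra hge
      push_neg at hge
      have : (1:ℝ) ≤ (b * (1 + a)) ^ (2*k) := one_le_pow₀ hge
      linarith
    show b < 1 / (1 + a)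
    rw [lt_div_iff₀ h1a]
    exact hlt
  refine ⟨key, le_antisymm (Set.iUnion₂_subset fun k hk => key k hk) ?_⟩
  intro p hp
  simp only [limitDomain, Set.mem_setOf_eq] at hp
  set a := ‖p.1‖ with ha_def
  set b := ‖p.2‖ with hb_def
  have ha : 0 ≤ a := norm_nonneg _
  have hb : 0 ≤ b := norm_nonneg _
  have h1a : (0:ℝ) < 1 + a := by linarith
  have hlt : b * (1 + a) < 1 := by
    rw [lt_div_iff₀ h1a] at hp; exact hp
  set u : ℝ := (b * (1 + a)) ^ 2 with hu_def
  have hu0 : 0 ≤ u := sq_nonneg _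
  have hu1 : u < 1 := by
    have := mul_nonneg hb h1a.le
    nlinarith
  set v : ℝ := (b * (1 - a)) ^ 2 with hv_def
  have hvu : v ≤ u := by
    simp only [hu_def, hv_def]
    nlinarith [sq_nonneg b, mul_nonneg hb h1a.le]
  set c : ℝ := a ^ 2 + b ^ 2 with hc_def
  have hc0 : 0 ≤ c := by positivity
  obtain ⟨n, hn⟩ := exists_pow_lt_of_lt_one (by norm_num : (0:ℝ) < 1/3) hu1
  obtain ⟨m, hm⟩ := exists_pow_lt_of_lt_one (by norm_num : (0:ℝ) < 1/3)
    (by norm_num : (1:ℝ)/2 < 1)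
  obtain ⟨N, hN⟩ := exists_nat_ge (2 * c)
  set k : ℕ := max (max n m) (max N 1) with hk_def
  have hk1 : 1 ≤ k := le_max_of_le_right (le_max_right _ _)
  have hkn : n ≤ k := le_max_of_le_left (le_max_left _ _)
  have hkm : m ≤ k := le_max_of_le_left (le_max_right _ _)
  have hkN : N ≤ k := le_max_of_le_right (le_max_left _ _)
  have hkpos : (0:ℝ) < (k:ℝ) := by exact_mod_cast hk1
  have huk : u ^ k < 1/3 :=
    lt_of_le_of_lt (pow_le_pow_of_le_one hu0 hu1.le hkn) hn
  have hvk : v ^ k ≤ u ^ k := pow_le_pow_left₀ (sq_nonneg _) hvu k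
  have hck : (c / (k:ℝ)) ^ k < 1/3 := by
    have hbase : c / (k:ℝ) ≤ 1/2 := by
      rw [div_le_iff₀ hkpos]
      have : (N:ℝ) ≤ (k:ℝ) := by exact_mod_cast hkN
      linarith
    calc (c / (k:ℝ)) ^ k ≤ (1/2) ^ k :=
          pow_le_pow_left₀ (div_nonneg hc0 hkpos.le) hbase k
      _ ≤ (1/2) ^ m := pow_le_pow_of_le_one (by norm_num) (by norm_num) hkm
      _ < 1/3 := hm
  have hmem : p ∈ anhDomain k := by
    simp only [anhDomain, Set.mem_setOf_eq]
    have e1 : b ^ (2*k) * (1 + a) ^ (2*k) = u ^ k := by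
      rw [hu_def, ← pow_mul, mul_pow, mul_comm 2 k]
    have e2 : b ^ (2*k) * (1 - a) ^ (2*k) = v ^ k := by
      rw [hv_def, ← pow_mul, mul_pow, mul_comm 2 k]
    rw [e1, e2, ← hc_def]
    linarith
  exact Set.mem_biUnion hk1 hmem
end
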